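/- Let T_{n;c}(x) = T_n(x) + c·T_{n−1}(x) with T_m the Chebyshev polynomial of the first kind. For n ≥ 2 and constants s, t with t ≠ 0: Res(T_{n;s}, T_{n−1;t}) = (−1)^{n(n+1)/2} · 2^{n²−3n+3} · t^n · T_{n;s}(−(1+st)/(2t)). -/

import Mathlib

open Polynomial Polynomial.Chebyshev

private lemma cardRootsC (p : ℂ[X]) : Multiset.card p.roots = p.natDegree := by
  have h := (Splits.natDegree_eq_card_roots
    (IsAlgClosed.splits p)).symm
  simpa using h

private lemma eval_prod_form (p : ℂ[X]) (v : ℂ) :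
    p.eval v = p.leadingCoeff * (p.roots.map fun a => v - a).prod :=
  Splits.eval_eq_prod_roots (IsAlgClosed.splits p) v

/-- Resultant swap over ℂ. -/
private lemma swap_lemma (f g : ℂ[X]) :
    f.leadingCoeff ^ g.natDegree * (f.roots.map (fun a => g.eval a)).prod =
    (-1) ^ (f.natDegree * g.natDegree) *
      (g.leadingCoeff ^ f.natDegree * (g.roots.map (fun a => f.eval a)).prod) := by
  have h1 : (f.roots.map (fun a => g.eval a)).prod =
      g.leadingCoeff ^ f.natDegree *
        (f.roots.map (fun a => (g.roots.map fun b => a - b).prod)).prod := by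
    rw [← cardRootsC f]
    calc (f.roots.map (fun a => g.eval a)).prod
        = (f.roots.map (fun a => g.leadingCoeff * (g.roots.map fun b => a - b).prod)).prod := by
          apply congrArg; apply Multiset.map_congr rfl; intro a _; exact eval_prod_form g a
      _ = _ := by
          rw [Multiset.prod_map_mul]; congr 1
          rw [Multiset.map_const', Multiset.prod_replicate]
  have h2 : (g.roots.map (fun a => f.eval a)).prod =
      f.leadingCoeff ^ g.natDegree *
        (g.roots.map (fun b => (f.roots.map fun a => b - a).prod)).prod := by
    rw [← cardRootsC g]
    calc (g.roots.map (fun a => f.eval a)).prod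
        = (g.roots.map (fun b => f.leadingCoeff * (f.roots.map fun a => b - a).prod)).prod := by
          apply congrArg; apply Multiset.map_congr rfl; intro b _; exact eval_prod_form f b
      _ = _ := by
          rw [Multiset.prod_map_mul]; congr 1
          rw [Multiset.map_const', Multiset.prod_replicate]
  have h3 : (f.roots.map (fun a => (g.roots.map fun b => a - b).prod)).prod =
      (-1) ^ (f.natDegree * g.natDegree) *
        (g.roots.map (fun b => (f.roots.map fun a => b - a).prod)).prod := by
    calc (f.roots.map (fun a => (g.roots.map fun b => a - b).prod)).prod
        = (f.roots.map (fun a =>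
            (-1 : ℂ) ^ g.natDegree * (g.roots.map fun b => b - a).prod)).prod := by
          apply congrArg; apply Multiset.map_congr rfl; intro a _
          have h := Multiset.prod_map_neg ((g.roots.map fun b => b - a))
          rw [Multiset.map_map, Multiset.card_map] at h
          rw [← cardRootsC g, ← h]
          apply congrArg; apply Multiset.map_congr rfl; intro b _
          simp only [Function.comp_apply]; ring
      _ = ((-1 : ℂ) ^ g.natDegree) ^ f.natDegree *
            (f.roots.map (fun a => (g.roots.map fun b => b - a).prod)).prod := by
          rw [Multiset.prod_map_mul, Multiset.map_const', Multiset.prod_replicate, cardRootsC]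
      _ = _ := by
          rw [← pow_mul, mul_comm g.natDegree f.natDegree,
            Multiset.prod_map_prod_map]
  rw [h1, h2, h3]; ring


private lemma two_X_mul_deg (p : ℂ[X]) :
    (2 * X * p).degree = p.degree + 1 ∧ (2 * X * p).leadingCoeff = 2 * p.leadingCoeff := by
  have h1 : (2 * X : ℂ[X]).degree = 1 := by compute_degree!
  have h2 : (2 * X : ℂ[X]).leadingCoeff = 2 := by
    rw [leadingCoeff, natDegree_eq_of_degree_eq_some h1]
    simp [coeff_X, coeff_one]
    rfl
  constructor
  · rw [degree_mul, h1, add_comm]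
  · rw [leadingCoeff_mul, h2]

private lemma T_deg_lc : ∀ m : ℕ,
    (T ℂ ((m : ℤ) + 1)).degree = ((m : ℕ) + 1 : ℕ) ∧
      (T ℂ ((m : ℤ) + 1)).leadingCoeff = 2 ^ m := by
  intro m
  induction m using Nat.strong_induction_on with
  | _ m ih =>
    match m with
    | 0 =>
      constructor <;> simp [T_one]
    | 1 =>
      have h : T ℂ ((1 : ℕ) + 1 : ℤ) = 2 * X ^ 2 - 1 := by
        norm_num [T_two]
      rw [h]
      have hd : (2 * X ^ 2 - 1 : ℂ[X]).degree = 2 := by compute_degree!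
      refine ⟨by exact_mod_cast hd, ?_⟩
      rw [leadingCoeff, natDegree_eq_of_degree_eq_some hd]
      simp [coeff_one]
    | (k+2) =>
      obtain ⟨hd1, hl1⟩ := ih k (by omega)
      obtain ⟨hd2, hl2⟩ := ih (k+1) (by omega)
      have hrec : T ℂ (((k+2 : ℕ) : ℤ) + 1) =
          2 * X * T ℂ (((k+1 : ℕ) : ℤ) + 1) - T ℂ ((k : ℤ) + 1) := by
        have h0 := T_add_two ℂ ((k : ℤ) + 1)
        have e1 : ((k+2 : ℕ) : ℤ) + 1 = (k : ℤ) + 1 + 2 := by push_cast; ring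
        have e2 : ((k+1 : ℕ) : ℤ) + 1 = (k : ℤ) + 1 + 1 := by push_cast; ring
        rw [e1, h0, e2]
      have hp2 : T ℂ (((k+1 : ℕ) : ℤ) + 1) ≠ 0 := by
        intro h
        rw [h, degree_zero] at hd2
        exact absurd hd2 (by exact_mod_cast (WithBot.bot_ne_coe (a := k+1+1)))
      obtain ⟨hma, hmb⟩ := two_X_mul_deg (T ℂ (((k+1 : ℕ) : ℤ) + 1))
      rw [hd2] at hma
      have hlt : (T ℂ ((k : ℤ) + 1)).degree < (2 * X * T ℂ (((k+1 : ℕ) : ℤ) + 1)).degree := by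
        rw [hma, hd1]
        norm_cast
        omega
      constructor
      · rw [hrec, degree_sub_eq_left_of_degree_lt hlt, hma]
        norm_cast
      · rw [hrec, leadingCoeff_sub_of_degree_lt hlt, hmb, hl2]
        ring


private lemma T_natDeg (m : ℕ) : (T ℂ ((m : ℤ) + 1)).natDegree = m + 1 :=
  natDegree_eq_of_degree_eq_some (T_deg_lc m).1

private lemma T_lc (m : ℕ) : (T ℂ ((m : ℤ) + 1)).leadingCoeff = 2 ^ m := (T_deg_lc m).2

private lemma T_ne (m : ℕ) : T ℂ ((m : ℤ) + 1) ≠ 0 := by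
  intro h
  have := (T_deg_lc m).1
  rw [h, degree_zero] at this
  exact absurd this (by exact_mod_cast (WithBot.bot_ne_coe (a := m+1)))

private lemma P_val : ∀ m : ℕ,
    ((T ℂ ((m : ℤ) + 1)).roots.map (fun a => (T ℂ ((m : ℤ) + 2)).eval a)).prod * 2 ^ m =
      (-1) ^ ((m + 1) * (m + 2) / 2) := by
  intro m
  induction m with
  | zero =>
    have h1 : T ℂ ((0 : ℕ) + 1 : ℤ) = X := by norm_num [T_one]
    have h2 : T ℂ ((0 : ℕ) + 2 : ℤ) = 2 * X ^ 2 - 1 := by norm_num [T_two]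
    rw [h1, h2, roots_X]
    simp
  | succ m ih =>
    set σ : ℂ := (-1) ^ ((m + 1) * (m + 2) / 2) with hσ
    have e2 : ((m + 1 : ℕ) : ℤ) + 1 = (m : ℤ) + 2 := by push_cast; ring
    have e3 : ((m + 1 : ℕ) : ℤ) + 2 = (m : ℤ) + 3 := by push_cast; ring
    set A := (T ℂ ((m : ℤ) + 2)).roots with hA
    have hcard : Multiset.card A = m + 2 := by
      rw [hA, ← e2, cardRootsC, T_natDeg]
    set Q : ℂ := (A.map (fun a => (T ℂ ((m : ℤ) + 1)).eval a)).prod with hQ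
    -- step 1 : product of T(m+3) over A equals (-1)^(m+2) * Q
    have step1 : (A.map (fun a => (T ℂ ((m : ℤ) + 3)).eval a)).prod = (-1) ^ (m + 2) * Q := by
      have hrec : T ℂ ((m : ℤ) + 3) = 2 * X * T ℂ ((m : ℤ) + 2) - T ℂ ((m : ℤ) + 1) := by
        have h0 := T_add_two ℂ ((m : ℤ) + 1)
        rw [show (m : ℤ) + 3 = (m : ℤ) + 1 + 2 from by ring, h0,
          show (m : ℤ) + 1 + 1 = (m : ℤ) + 2 from by ring]
      calc (A.map (fun a => (T ℂ ((m : ℤ) + 3)).eval a)).prod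
          = (A.map (fun a => (-1) * (T ℂ ((m : ℤ) + 1)).eval a)).prod := by
            apply congrArg; apply Multiset.map_congr rfl
            intro a ha
            have hz : (T ℂ ((m : ℤ) + 2)).eval a = 0 :=
              isRoot_of_mem_roots (hA ▸ ha)
            rw [hrec]
            simp only [eval_sub, eval_mul, eval_ofNat, eval_X, hz]
            ring
        _ = (-1) ^ (m + 2) * Q := by
            rw [Multiset.prod_map_mul, Multiset.map_const', Multiset.prod_replicate, hcard, hQ]
    -- step 2 : swap
    have step2 : Q * 2 ^ ((m + 1) * (m + 1)) =
        2 ^ (m * (m + 2)) *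
          ((T ℂ ((m : ℤ) + 1)).roots.map (fun a => (T ℂ ((m : ℤ) + 2)).eval a)).prod := by
      have hs := swap_lemma (T ℂ ((m : ℤ) + 2)) (T ℂ ((m : ℤ) + 1))
      rw [← e2] at hs
      rw [T_natDeg, T_natDeg, T_lc, e2] at hs
      have hlc1 : (T ℂ ((m : ℤ) + 1)).leadingCoeff = 2 ^ m := T_lc m
      rw [hlc1] at hs
      have heven : (-1 : ℂ) ^ ((m + 1 + 1) * (m + 1)) = 1 := by
        refine Even.neg_one_pow ?_
        have := Nat.even_mul_succ_self (m + 1)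
        rwa [mul_comm] at this
      rw [heven, one_mul, ← pow_mul, ← pow_mul] at hs
      linear_combination hs
    -- combine
    set P : ℂ := ((T ℂ ((m : ℤ) + 1)).roots.map (fun a => (T ℂ ((m : ℤ) + 2)).eval a)).prod
      with hP
    have hcancel : Q * 2 ^ (m + 1) = σ := by
      have h2 : (2 : ℂ) ^ (m ^ 2 + 2 * m) ≠ 0 := pow_ne_zero _ two_ne_zero
      apply mul_right_cancel₀ h2
      calc Q * 2 ^ (m + 1) * 2 ^ (m ^ 2 + 2 * m)
          = Q * 2 ^ ((m + 1) * (m + 1)) * 2 ^ m := by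
            rw [mul_assoc, mul_assoc, ← pow_add, ← pow_add]
            congr 2
            ring
        _ = 2 ^ (m * (m + 2)) * P * 2 ^ m := by rw [step2, hP]
        _ = 2 ^ (m * (m + 2)) * (P * 2 ^ m) := by ring
        _ = σ * 2 ^ (m ^ 2 + 2 * m) := by
            rw [ih, show m * (m + 2) = m ^ 2 + 2 * m from by ring, mul_comm]
    rw [e2, e3, step1]
    calc (-1 : ℂ) ^ (m + 2) * Q * 2 ^ (m + 1) = (-1) ^ (m + 2) * (Q * 2 ^ (m + 1)) := by ring
      _ = (-1) ^ (m + 2) * σ := by rw [hcancel]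
      _ = (-1) ^ ((m + 1 + 1) * (m + 1 + 2) / 2) := by
          have hexp : (m + 2) + (m + 1) * (m + 2) / 2 = (m + 1 + 1) * (m + 1 + 2) / 2 := by
            have d1 : 2 ∣ (m + 1) * (m + 2) := (Nat.even_mul_succ_self (m + 1)).two_dvd
            have d2 : 2 ∣ (m + 1 + 1) * (m + 1 + 2) := (Nat.even_mul_succ_self (m + 2)).two_dvd
            have hAB : (m + 1 + 1) * (m + 1 + 2) = (m + 1) * (m + 2) + 2 * (m + 2) := by ring
            omega
          rw [hσ, ← pow_add, hexp]


/-- The resultant: `Res f g = lc(f)^(deg g) * ∏_{α root of f} g(α)`. -/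
noncomputable def Res (f g : Polynomial ℂ) : ℂ :=
  f.leadingCoeff ^ g.natDegree * (f.roots.map (fun a => g.eval a)).prod

theorem stmt_8 (n : ℕ) (hn : 2 ≤ n) (s t : ℂ) (ht : t ≠ 0) :
    Res (T ℂ n + C s * T ℂ ((n : ℤ) - 1)) (T ℂ ((n : ℤ) - 1) + C t * T ℂ ((n : ℤ) - 2)) =
      (-1) ^ (n * (n + 1) / 2) * 2 ^ (n ^ 2 + 3 - 3 * n) * t ^ n *
        (T ℂ n + C s * T ℂ ((n : ℤ) - 1)).eval (-(1 + s * t) / (2 * t)) := by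
  obtain ⟨m, rfl⟩ : ∃ m, n = m + 2 := ⟨n - 2, by omega⟩
  have i1 : ((m + 2 : ℕ) : ℤ) = (m : ℤ) + 2 := by push_cast; ring
  have i2 : ((m + 2 : ℕ) : ℤ) - 1 = (m : ℤ) + 1 := by push_cast; ring
  have i3 : ((m + 2 : ℕ) : ℤ) - 2 = (m : ℤ) := by push_cast; ring
  rw [i2, i3, i1]
  set r : ℂ := -(1 + s * t) / (2 * t) with hr
  set f : ℂ[X] := T ℂ ((m : ℤ) + 2) + C s * T ℂ ((m : ℤ) + 1) with hf
  set g : ℂ[X] := T ℂ ((m : ℤ) + 1) + C t * T ℂ (m : ℤ) with hg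
  -- degrees and leading coefficients
  have hTmle : (T ℂ (m : ℤ)).degree ≤ (m : ℕ) := by
    cases m with
    | zero => simp [T_zero]
    | succ k =>
      have := (T_deg_lc k).1
      rw [show ((Nat.succ k : ℕ) : ℤ) = (k : ℤ) + 1 from by push_cast; ring, this]
  have hCmul : ∀ (c : ℂ) (p : ℂ[X]), (C c * p).degree ≤ p.degree := fun c p => by
    calc (C c * p).degree ≤ (C c).degree + p.degree := degree_mul_le _ _
      _ ≤ 0 + p.degree := add_le_add degree_C_le le_rfl
      _ = p.degree := zero_add _
  have hCs : (C s * T ℂ ((m : ℤ) + 1)).degree < (T ℂ ((m : ℤ) + 2)).degree := by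
    rw [show ((m : ℤ) + 2) = (((m + 1 : ℕ) : ℤ) + 1) from by push_cast; ring,
      (T_deg_lc (m + 1)).1]
    calc (C s * T ℂ ((m : ℤ) + 1)).degree ≤ (T ℂ ((m : ℤ) + 1)).degree := hCmul _ _
      _ = ((m + 1 : ℕ) : WithBot ℕ) := (T_deg_lc m).1
      _ < ((m + 1 + 1 : ℕ) : WithBot ℕ) := by exact_mod_cast Nat.lt_succ_self _
  have hCt : (C t * T ℂ (m : ℤ)).degree < (T ℂ ((m : ℤ) + 1)).degree := by
    rw [(T_deg_lc m).1]
    calc (C t * T ℂ (m : ℤ)).degree ≤ (T ℂ (m : ℤ)).degree := hCmul _ _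
      _ ≤ ((m : ℕ) : WithBot ℕ) := hTmle
      _ < ((m + 1 : ℕ) : WithBot ℕ) := by exact_mod_cast Nat.lt_succ_self _
  have hfdeg : f.degree = ((m + 2 : ℕ) : WithBot ℕ) := by
    rw [hf, degree_add_eq_left_of_degree_lt hCs,
      show ((m : ℤ) + 2) = (((m + 1 : ℕ) : ℤ) + 1) from by push_cast; ring, (T_deg_lc (m + 1)).1]
  have hfnat : f.natDegree = m + 2 := natDegree_eq_of_degree_eq_some hfdeg
  have hflc : f.leadingCoeff = 2 ^ (m + 1) := by
    rw [hf, add_comm, leadingCoeff_add_of_degree_lt hCs,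
      show ((m : ℤ) + 2) = (((m + 1 : ℕ) : ℤ) + 1) from by push_cast; ring, T_lc]
  have hgnat : g.natDegree = m + 1 := by
    apply natDegree_eq_of_degree_eq_some
    rw [hg, degree_add_eq_left_of_degree_lt hCt, (T_deg_lc m).1]
  have hfne : f ≠ 0 := by
    intro h; rw [h, degree_zero] at hfdeg
    exact absurd hfdeg (by exact_mod_cast (WithBot.bot_ne_coe (a := m + 2)))
  have hcardf : Multiset.card f.roots = m + 2 := by rw [cardRootsC, hfnat]
  -- per-root value of g
  have hTm : T ℂ (m : ℤ) = 2 * X * T ℂ ((m : ℤ) + 1) - T ℂ ((m : ℤ) + 2) := by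
    have h0 := T_add_two ℂ (m : ℤ)
    linear_combination h0
  have hroot : ∀ a ∈ f.roots,
      g.eval a = (2 * t * (a - r)) * (T ℂ ((m : ℤ) + 1)).eval a := by
    intro a ha
    have hfa : f.eval a = 0 := isRoot_of_mem_roots ha
    rw [hf] at hfa
    simp only [eval_add, eval_mul, eval_C] at hfa
    have hE : g.eval a = (T ℂ ((m : ℤ) + 1)).eval a +
        t * (2 * a * (T ℂ ((m : ℤ) + 1)).eval a - (T ℂ ((m : ℤ) + 2)).eval a) := by
      rw [hg, hTm]
      simp only [eval_add, eval_mul, eval_sub, eval_C, eval_X, eval_ofNat]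
    have hlin : 2 * t * (a - r) = 2 * t * a + (1 + s * t) := by
      rw [hr]
      field_simp
      ring
    rw [hE, hlin]
    linear_combination (-t) * hfa
  -- split the product
  set V : ℂ := (f.roots.map (fun a => (T ℂ ((m : ℤ) + 1)).eval a)).prod with hV
  set W : ℂ := (f.roots.map (fun a => r - a)).prod with hW
  have hevalr : f.eval r = 2 ^ (m + 1) * W := by
    rw [eval_prod_form f r, hflc, hW]
  have hAR : (f.roots.map (fun a => a - r)).prod = (-1) ^ (m + 2) * W := by
    have h := Multiset.prod_map_neg (f.roots.map fun a => r - a)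
    rw [Multiset.map_map, Multiset.card_map, hcardf] at h
    rw [hW, ← h]
    apply congrArg; apply Multiset.map_congr rfl; intro b _
    simp only [Function.comp_apply]; ring
  have hprodg : (f.roots.map (fun a => g.eval a)).prod =
      (2 * t) ^ (m + 2) * ((-1) ^ (m + 2) * W) * V := by
    rw [Multiset.map_congr rfl hroot, ← hAR]
    calc (f.roots.map (fun a => (2 * t * (a - r)) * (T ℂ ((m : ℤ) + 1)).eval a)).prod
        = (f.roots.map (fun a => 2 * t * (a - r))).prod * V := by
          rw [hV, ← Multiset.prod_map_mul]
      _ = ((2 * t) ^ (m + 2) * (f.roots.map (fun a => a - r)).prod) * V := by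
          congr 1
          calc (f.roots.map (fun a => 2 * t * (a - r))).prod
              = (f.roots.map (fun a => (2 * t) * (a - r))).prod := rfl
            _ = (f.roots.map (fun _ => (2 * t : ℂ))).prod *
                  (f.roots.map (fun a => a - r)).prod := by rw [← Multiset.prod_map_mul]
            _ = (2 * t) ^ (m + 2) * (f.roots.map (fun a => a - r)).prod := by
                rw [Multiset.map_const', Multiset.prod_replicate, hcardf]
  -- V via swap lemma and P_val
  have hVval : V * 2 ^ (m + 1) = (-1) ^ ((m + 1) * (m + 2) / 2) := by
    have hs := swap_lemma f (T ℂ ((m : ℤ) + 1))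
    rw [T_natDeg, T_lc, hfnat, hflc] at hs
    have hfb : ((T ℂ ((m : ℤ) + 1)).roots.map (fun a => f.eval a)).prod =
        ((T ℂ ((m : ℤ) + 1)).roots.map (fun a => (T ℂ ((m : ℤ) + 2)).eval a)).prod := by
      apply congrArg; apply Multiset.map_congr rfl
      intro b hb
      have hzb : (T ℂ ((m : ℤ) + 1)).eval b = 0 := isRoot_of_mem_roots hb
      rw [hf]
      simp [hzb]
    rw [hfb] at hs
    have heven : (-1 : ℂ) ^ ((m + 2) * (m + 1)) = 1 := by
      refine Even.neg_one_pow ?_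
      have := Nat.even_mul_succ_self (m + 1)
      rwa [mul_comm] at this
    rw [heven, one_mul, ← pow_mul, ← pow_mul, ← hV] at hs
    have hP := P_val m
    have h2 : (2 : ℂ) ^ (m ^ 2 + 2 * m) ≠ 0 := pow_ne_zero _ two_ne_zero
    apply mul_right_cancel₀ h2
    calc V * 2 ^ (m + 1) * 2 ^ (m ^ 2 + 2 * m)
        = V * 2 ^ ((m + 1) * (m + 1)) * 2 ^ m := by
          rw [mul_assoc, mul_assoc, ← pow_add, ← pow_add]
          congr 2
          ring
      _ = 2 ^ (m * (m + 2)) *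
            (((T ℂ ((m : ℤ) + 1)).roots.map (fun a => (T ℂ ((m : ℤ) + 2)).eval a)).prod *
              2 ^ m) := by rw [← mul_assoc, ← hs]; ring
      _ = (-1) ^ ((m + 1) * (m + 2) / 2) * 2 ^ (m ^ 2 + 2 * m) := by
          rw [hP, show m * (m + 2) = m ^ 2 + 2 * m from by ring, mul_comm]
  -- final assembly
  have hexp2 : (m + 2) ^ 2 + 3 - 3 * (m + 2) = m ^ 2 + m + 1 := by
    have hsq : (m + 2) ^ 2 = m ^ 2 + 4 * m + 4 := by ring
    omega
  have hsgn : (-1 : ℂ) ^ (m + 2) * (-1) ^ ((m + 1) * (m + 2) / 2) =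
      (-1) ^ ((m + 2) * (m + 2 + 1) / 2) := by
    rw [← pow_add]
    congr 1
    have d1 : 2 ∣ (m + 1) * (m + 2) := (Nat.even_mul_succ_self (m + 1)).two_dvd
    have d2 : 2 ∣ (m + 2) * (m + 2 + 1) := (Nat.even_mul_succ_self (m + 2)).two_dvd
    have hAB : (m + 2) * (m + 2 + 1) = (m + 1) * (m + 2) + 2 * (m + 2) := by ring
    omega
  rw [show Res f g = f.leadingCoeff ^ g.natDegree * (f.roots.map (fun a => g.eval a)).prod
    from rfl, hgnat, hflc, hprodg, hexp2]
  have h2 : (2 : ℂ) ^ (2 * (m + 1)) ≠ 0 := pow_ne_zero _ two_ne_zero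
  apply mul_right_cancel₀ h2
  have e2pow : ((2 : ℂ) ^ (m + 1)) ^ (m + 1) * 2 ^ (m + 2) =
      2 ^ (m ^ 2 + m + 1) * 2 ^ (2 * (m + 1)) := by
    rw [← pow_mul, ← pow_add, ← pow_add]
    congr 1
    ring
  calc ((2 : ℂ) ^ (m + 1)) ^ (m + 1) * ((2 * t) ^ (m + 2) * ((-1) ^ (m + 2) * W) * V) *
        2 ^ (2 * (m + 1))
      = ((2 : ℂ) ^ (m + 1)) ^ (m + 1) * (2 * t) ^ (m + 2) * (-1) ^ (m + 2) *
          (2 ^ (m + 1) * W) * (V * 2 ^ (m + 1)) := by ring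
    _ = ((2 : ℂ) ^ (m + 1)) ^ (m + 1) * (2 * t) ^ (m + 2) * (-1) ^ (m + 2) *
          f.eval r * (-1) ^ ((m + 1) * (m + 2) / 2) := by rw [← hevalr, hVval]
    _ = (((2 : ℂ) ^ (m + 1)) ^ (m + 1) * 2 ^ (m + 2)) * t ^ (m + 2) *
          ((-1) ^ (m + 2) * (-1) ^ ((m + 1) * (m + 2) / 2)) * f.eval r := by
        rw [mul_pow]; ring
    _ = ((2 : ℂ) ^ (m ^ 2 + m + 1) * 2 ^ (2 * (m + 1))) * t ^ (m + 2) *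
          (-1) ^ ((m + 2) * (m + 2 + 1) / 2) * f.eval r := by rw [e2pow, hsgn]
    _ = (-1) ^ ((m + 2) * (m + 2 + 1) / 2) * 2 ^ (m ^ 2 + m + 1) * t ^ (m + 2) * f.eval r *
        2 ^ (2 * (m + 1)) := by ring
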